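/- Let a>0, b>0 and α∈(1,2). For every ε₀ ∈ (0, π/2), every x>0 and every t>0, lim_{K→∞} ∫_{π/2+ε₀}^{π} i K e^{iθ} · e^{x K e^{iθ}} · exp( −a ∫₀^t v_s(K e^{iθ}) ds ) dθ = 0, i.e., the contour integral of z ↦ e^{xz} exp(−a ∫₀^t v_s(z) ds) over the circular arc { K e^{iθ} : θ ∈ [π/2+ε₀, π] } tends to 0 as K → ∞. -/

import Mathlib

open Real Filter

/-- The complex extension of the function `v_s(z)`, defined via principal-branch
complex powers (with the convention `0 ^ β = 0`). -/
noncomputable def vC (b α : ℝ) (s : ℝ) (z : ℂ) : ℂ :=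
  ((1 / ((α : ℂ) * (b : ℂ)) + z ^ ((1 : ℂ) - (α : ℂ))) * Complex.exp ((b * (α - 1) * s : ℝ) : ℂ)
      - 1 / ((α : ℂ) * (b : ℂ))) ^ ((1 : ℂ) / (1 - (α : ℂ)))


lemma Ke_eq (K θ : ℝ) (hK : 0 < K) :
    (K:ℂ) * Complex.exp ((θ:ℂ) * Complex.I) = Complex.exp ((Real.log K : ℂ) + (θ:ℂ) * Complex.I) := by
  rw [Complex.exp_add]
  congr 1
  rw [← Complex.ofReal_exp, Real.exp_log hK]

lemma Ke_cpow (K θ : ℝ) (hK : 0 < K) (hθ1 : -π < θ) (hθ2 : θ ≤ π) (c : ℂ) :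
    ((K:ℂ) * Complex.exp ((θ:ℂ) * Complex.I)) ^ c
      = Complex.exp (c * ((Real.log K : ℂ) + (θ:ℂ) * Complex.I)) := by
  rw [Ke_eq K θ hK, Complex.cpow_def_of_ne_zero (Complex.exp_ne_zero _),
    Complex.log_exp (by simpa using hθ1) (by simpa using hθ2), mul_comm]

lemma Ke_cpow_re (K θ α : ℝ) (hK : 0 < K) (hθ1 : -π < θ) (hθ2 : θ ≤ π) :
    ((((K:ℂ) * Complex.exp ((θ:ℂ) * Complex.I)) ^ ((1:ℂ) - (α:ℂ))).re
        = K ^ (1-α) * Real.cos ((1-α)*θ)) ∧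
      ((((K:ℂ) * Complex.exp ((θ:ℂ) * Complex.I)) ^ ((1:ℂ) - (α:ℂ))).im
        = K ^ (1-α) * Real.sin ((1-α)*θ)) := by
  rw [Ke_cpow K θ hK hθ1 hθ2]
  have h1 : (((1:ℂ) - (α:ℂ)) * ((Real.log K : ℂ) + (θ:ℂ) * Complex.I)).re = (1-α) * Real.log K := by
    simp
  have h2 : (((1:ℂ) - (α:ℂ)) * ((Real.log K : ℂ) + (θ:ℂ) * Complex.I)).im = (1-α) * θ := by
    simp
  rw [Complex.exp_re, Complex.exp_im, h1, h2, Real.rpow_def_of_pos hK]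
  constructor <;> ring_nf

noncomputable def innerW (b α s K θ : ℝ) : ℂ :=
  (1 / ((α : ℂ) * (b : ℂ)) + ((K:ℂ) * Complex.exp ((θ:ℂ) * Complex.I)) ^ ((1 : ℂ) - (α : ℂ)))
      * Complex.exp ((b * (α - 1) * s : ℝ) : ℂ) - 1 / ((α : ℂ) * (b : ℂ))


lemma innerW_im (b α s K θ : ℝ) (hK : 0 < K) (hθ1 : -π < θ) (hθ2 : θ ≤ π) :
    (innerW b α s K θ).im
      = K ^ (1-α) * Real.sin ((1-α)*θ) * Real.exp (b*(α-1)*s) := by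
  have him := (Ke_cpow_re K θ α hK hθ1 hθ2).2
  unfold innerW
  have h1 : (1 / ((α : ℂ) * (b : ℂ))) = ((1/(α*b) : ℝ) : ℂ) := by push_cast; ring
  rw [h1, Complex.sub_im, Complex.mul_im, Complex.add_im, Complex.add_re, him,
    Complex.exp_ofReal_re (b*(α-1)*s), Complex.exp_ofReal_im (b*(α-1)*s)]
  simp

lemma innerW_re (b α s K θ : ℝ) (hK : 0 < K) (hθ1 : -π < θ) (hθ2 : θ ≤ π) :
    (innerW b α s K θ).re
      = (1/(α*b) + K ^ (1-α) * Real.cos ((1-α)*θ)) * Real.exp (b*(α-1)*s) - 1/(α*b) := by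
  have hre := (Ke_cpow_re K θ α hK hθ1 hθ2).1
  unfold innerW
  have h1 : (1 / ((α : ℂ) * (b : ℂ))) = ((1/(α*b) : ℝ) : ℂ) := by push_cast; ring
  rw [h1, Complex.sub_re, Complex.mul_re, Complex.add_re, hre,
    Complex.exp_ofReal_re (b*(α-1)*s), Complex.exp_ofReal_im (b*(α-1)*s)]
  simp

lemma vC_eq (b α s K θ : ℝ) :
    vC b α s ((K:ℂ) * Complex.exp ((θ:ℂ) * Complex.I))
      = (innerW b α s K θ) ^ ((1 : ℂ) / (1 - (α : ℂ))) := rfl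

lemma vC_abs_le (b α s K θ : ℝ) (hα : 1 < α) {X : ℝ} (hX : 0 < X)
    (hXle : X ≤ ‖innerW b α s K θ‖) :
    ‖vC b α s ((K:ℂ) * Complex.exp ((θ:ℂ) * Complex.I))‖ ≤ X ^ (-(α-1)⁻¹) := by
  rw [vC_eq]
  have hexp : (1 : ℂ) / (1 - (α : ℂ)) = ((-(α-1)⁻¹ : ℝ) : ℂ) := by
    push_cast
    rw [one_div, show (1:ℂ) - (α:ℂ) = -((α:ℂ)-1) by ring, inv_neg]
  rw [hexp, Complex.norm_cpow_real]
  exact Real.rpow_le_rpow_of_nonpos hX hXle (neg_nonpos.mpr (inv_nonneg.mpr (by linarith)))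

lemma sin_alpha_theta_pos (α θ : ℝ) (hα : 1 < α) (hα2 : α < 2) (hθ0 : 0 < θ) (hθ2 : θ ≤ π) :
    0 < Real.sin ((α-1)*θ) := by
  apply Real.sin_pos_of_pos_of_lt_pi
  · exact mul_pos (by linarith) hθ0
  · calc (α-1)*θ ≤ (α-1)*π := by nlinarith [Real.pi_pos]
      _ < 1*π := by nlinarith [Real.pi_pos]
      _ = π := one_mul π

lemma vC_integrable (b α K θ u v : ℝ) (hb : 0 < b) (hα : 1 < α) (hα2 : α < 2)
    (hK : 0 < K) (hθ0 : 0 < θ) (hθ2 : θ ≤ π) :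
    IntervalIntegrable (fun s => vC b α s ((K:ℂ) * Complex.exp ((θ:ℂ) * Complex.I)))
      MeasureTheory.volume u v := by
  apply Continuous.intervalIntegrable
  have hθ1 : -π < θ := by linarith [Real.pi_pos]
  have hcont : Continuous (fun s : ℝ => innerW b α s K θ) := by
    unfold innerW
    apply Continuous.sub _ continuous_const
    apply Continuous.mul continuous_const
    have harg : Continuous (fun s : ℝ => ((b * (α - 1) * s : ℝ) : ℂ)) :=
      Complex.continuous_ofReal.comp (continuous_const.mul continuous_id)
    exact Complex.continuous_exp.comp harg
  rw [continuous_iff_continuousAt]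
  intro s₀
  have him : (innerW b α s₀ K θ).im ≠ 0 := by
    rw [innerW_im b α s₀ K θ hK hθ1 hθ2]
    have hs := sin_alpha_theta_pos α θ hα hα2 hθ0 hθ2
    have h1 : Real.sin ((1-α)*θ) = -Real.sin ((α-1)*θ) := by
      rw [show (1-α)*θ = -((α-1)*θ) by ring, Real.sin_neg]
    rw [h1]
    have h2 : (0:ℝ) < K ^ (1-α) := Real.rpow_pos_of_pos hK _
    have h3 : (0:ℝ) < Real.exp (b*(α-1)*s₀) := Real.exp_pos _
    have h4 : K ^ (1-α) * -Real.sin ((α-1)*θ) * Real.exp (b*(α-1)*s₀) < 0 := by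
      nlinarith [mul_pos (mul_pos h2 hs) h3]
    exact ne_of_lt h4
  have : ContinuousAt (fun w : ℂ => w ^ ((1 : ℂ) / (1 - (α : ℂ)))) (innerW b α s₀ K θ) :=
    continuousAt_cpow_const (Complex.mem_slitPlane_iff.mpr (Or.inr him))
  show ContinuousAt ((fun w : ℂ => w ^ ((1 : ℂ) / (1 - (α : ℂ)))) ∘ (fun s => innerW b α s K θ)) s₀
  exact ContinuousAt.comp (f := fun s => innerW b α s K θ) this hcont.continuousAt

set_option maxHeartbeats 1000000 in
lemma J_bound (b α t K θ m : ℝ) (hb : 0 < b) (hα : 1 < α) (hα2 : α < 2) (ht : 0 < t)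
    (hm : 0 < m) (hmθ : m ≤ Real.sin ((α-1)*θ)) (hθ0 : 0 < θ) (hθπ : θ ≤ π)
    (hK1 : 1 ≤ K) (hut : K ^ (-((α-1)/2)) ≤ t)
    (hKE : K ^ (1-α) * Real.exp (b*(α-1)*t) ≤ ((α-1)/α/2) * K ^ (-((α-1)/2))) :
    ‖∫ s in (0:ℝ)..t, vC b α s ((K:ℂ) * Complex.exp ((θ:ℂ) * Complex.I))‖
      ≤ (m ^ (-(α-1)⁻¹) + t * ((α-1)/α/2) ^ (-(α-1)⁻¹)) * K ^ ((3-α)/2) := by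
  have hK0 : (0:ℝ) < K := lt_of_lt_of_le one_pos hK1
  have hα1 : (0:ℝ) < α - 1 := by linarith
  have hθ1 : -π < θ := by linarith [Real.pi_pos]
  set γ : ℝ := (α-1)⁻¹ with hγ
  set u : ℝ := K ^ (-((α-1)/2)) with hudef
  have hu0 : 0 < u := Real.rpow_pos_of_pos hK0 _
  set c₂ : ℝ := (α-1)/α/2 with hc₂
  have hc₂0 : 0 < c₂ := by
    have : (0:ℝ) < α := by linarith
    positivity
  have hKα : (0:ℝ) < K ^ (1-α) := Real.rpow_pos_of_pos hK0 _
  -- pointwise bounds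
  have boundA : ∀ s ∈ Set.uIoc (0:ℝ) u,
      ‖vC b α s ((K:ℂ) * Complex.exp ((θ:ℂ) * Complex.I))‖ ≤ (m * K ^ (1-α)) ^ (-γ) := by
    rw [Set.uIoc_of_le hu0.le]
    intro s hs
    have hs0 : 0 ≤ s := hs.1.le
    apply vC_abs_le b α s K θ hα (by positivity)
    have hexp1 : (1:ℝ) ≤ Real.exp (b*(α-1)*s) := by
      rw [Real.one_le_exp_iff]; positivity
    have him := innerW_im b α s K θ hK0 hθ1 hθπ
    have h1 : Real.sin ((1-α)*θ) = -Real.sin ((α-1)*θ) := by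
      rw [show (1-α)*θ = -((α-1)*θ) by ring, Real.sin_neg]
    have hsinpos : 0 < Real.sin ((α-1)*θ) := hm.trans_le hmθ
    calc m * K ^ (1-α) ≤ (K ^ (1-α) * Real.sin ((α-1)*θ)) * Real.exp (b*(α-1)*s) := by
          nlinarith [mul_le_mul_of_nonneg_left hmθ hKα.le, mul_pos hKα hsinpos]
      _ = |(innerW b α s K θ).im| := by
          rw [him, h1, abs_of_nonpos (by nlinarith [mul_pos (mul_pos hKα hsinpos) (Real.exp_pos (b*(α-1)*s))])]
          ring
      _ ≤ ‖innerW b α s K θ‖ := Complex.abs_im_le_norm _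
  have boundB : ∀ s ∈ Set.uIoc u t,
      ‖vC b α s ((K:ℂ) * Complex.exp ((θ:ℂ) * Complex.I))‖ ≤ (c₂ * u) ^ (-γ) := by
    rw [Set.uIoc_of_le hut]
    intro s hs
    have hsu : u ≤ s := hs.1.le
    have hst : s ≤ t := hs.2
    have hs0 : 0 ≤ s := hu0.le.trans hsu
    apply vC_abs_le b α s K θ hα (by positivity)
    set A1 : ℝ := Real.exp (b*(α-1)*s) with hA1
    have hA1pos : 0 < A1 := Real.exp_pos _
    have hA1ge : b*(α-1)*s + 1 ≤ A1 := Real.add_one_le_exp _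
    have hA1le : A1 ≤ Real.exp (b*(α-1)*t) := by
      apply Real.exp_le_exp.mpr
      nlinarith [mul_nonneg (mul_nonneg hb.le hα1.le) (by linarith : (0:ℝ) ≤ t - s)]
    have hcos : -1 ≤ Real.cos ((1-α)*θ) := Real.neg_one_le_cos _
    have hre := innerW_re b α s K θ hK0 hθ1 hθπ
    have key : c₂ * u ≤ (innerW b α s K θ).re := by
      rw [hre]
      have hαb : (0:ℝ) < α * b := by positivity
      have hα0 : α ≠ 0 := by linarith
      have hb0 : b ≠ 0 := hb.ne'
      have e1 : (α-1)/α * s ≤ (A1 - 1)/(α*b) := by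
        calc (α-1)/α * s = (b*(α-1)*s)/(α*b) := by field_simp
          _ ≤ (A1 - 1)/(α*b) := (div_le_div_iff_of_pos_right hαb).mpr (by linarith)
      have e2 : -(K ^ (1-α) * Real.exp (b*(α-1)*t)) ≤ K ^ (1-α) * Real.cos ((1-α)*θ) * A1 := by
        nlinarith [mul_nonneg (mul_nonneg hKα.le hA1pos.le) (by linarith : (0:ℝ) ≤ Real.cos ((1-α)*θ) + 1),
          mul_le_mul_of_nonneg_left hA1le hKα.le]
      have e3 : c₂ * u ≤ (α-1)/α * s - K ^ (1-α) * Real.exp (b*(α-1)*t) := by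
        have h5 : (α-1)/α * u ≤ (α-1)/α * s :=
          mul_le_mul_of_nonneg_left hsu (by positivity)
        have h2c : (α-1)/α = 2*c₂ := by rw [hc₂]; ring
        rw [h2c] at h5 ⊢
        linarith
      have expand : (1/(α*b) + K ^ (1-α) * Real.cos ((1-α)*θ)) * A1 - 1/(α*b)
          = (A1 - 1)/(α*b) + K ^ (1-α) * Real.cos ((1-α)*θ) * A1 := by
        field_simp
        ring
      rw [expand]
      linarith
    exact key.trans (Complex.re_le_norm _)
  -- split the integral
  have hi1 := vC_integrable b α K θ 0 u hb hα hα2 hK0 hθ0 hθπ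
  have hi2 := vC_integrable b α K θ u t hb hα hα2 hK0 hθ0 hθπ
  rw [← intervalIntegral.integral_add_adjacent_intervals hi1 hi2]
  have nA := intervalIntegral.norm_integral_le_of_norm_le_const boundA
  have nB := intervalIntegral.norm_integral_le_of_norm_le_const boundB
  have hρ : (0:ℝ) < (3-α)/2 := by linarith
  have hKρ : (0:ℝ) < K ^ ((3-α)/2) := Real.rpow_pos_of_pos hK0 _
  -- simplify bound A
  have hA' : (m * K ^ (1-α)) ^ (-γ) * |u - 0| ≤ m ^ (-γ) * K ^ ((3-α)/2) := by
    have habs : |u - 0| = u := by rw [sub_zero, abs_of_pos hu0]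
    rw [habs, Real.mul_rpow hm.le hKα.le, ← Real.rpow_mul hK0.le]
    have hexp1 : (1-α) * (-γ) = 1 := by rw [hγ]; field_simp; ring
    rw [hexp1, Real.rpow_one]
    apply le_of_eq
    calc m ^ (-γ) * K * u = m ^ (-γ) * (K ^ (1:ℝ) * K ^ (-((α-1)/2))) := by
          rw [Real.rpow_one, hudef]; ring
      _ = m ^ (-γ) * K ^ (1 + -((α-1)/2)) := by rw [Real.rpow_add hK0]
      _ = m ^ (-γ) * K ^ ((3-α)/2) := by rw [show (1 + -((α-1)/2)) = (3-α)/2 by ring]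
  -- simplify bound B
  have hB' : (c₂ * u) ^ (-γ) * |t - u| ≤ (t * c₂ ^ (-γ)) * K ^ ((3-α)/2) := by
    have habs : |t - u| ≤ t := by rw [abs_of_nonneg (by linarith)]; linarith
    have h2 : (c₂ * u) ^ (-γ) = c₂ ^ (-γ) * K ^ ((1:ℝ)/2) := by
      rw [Real.mul_rpow hc₂0.le hu0.le, hudef, ← Real.rpow_mul hK0.le]
      congr 2
      rw [hγ]; field_simp
    have h3 : K ^ ((1:ℝ)/2) ≤ K ^ ((3-α)/2) :=
      Real.rpow_le_rpow_of_exponent_le hK1 (by linarith)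
    have h4 : (0:ℝ) < c₂ ^ (-γ) := Real.rpow_pos_of_pos hc₂0 _
    calc (c₂ * u) ^ (-γ) * |t - u| ≤ (c₂ ^ (-γ) * K ^ ((1:ℝ)/2)) * t := by
          rw [h2]
          apply mul_le_mul_of_nonneg_left habs (by positivity)
      _ ≤ (t * c₂ ^ (-γ)) * K ^ ((3-α)/2) := by
          nlinarith [mul_le_mul_of_nonneg_left h3 (by positivity : (0:ℝ) ≤ t * c₂ ^ (-γ))]
  calc ‖(∫ s in (0:ℝ)..u, vC b α s ((K:ℂ) * Complex.exp ((θ:ℂ) * Complex.I)))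
        + ∫ s in u..t, vC b α s ((K:ℂ) * Complex.exp ((θ:ℂ) * Complex.I))‖
      ≤ ‖∫ s in (0:ℝ)..u, vC b α s ((K:ℂ) * Complex.exp ((θ:ℂ) * Complex.I))‖
        + ‖∫ s in u..t, vC b α s ((K:ℂ) * Complex.exp ((θ:ℂ) * Complex.I))‖ := norm_add_le _ _
    _ ≤ (m * K ^ (1-α)) ^ (-γ) * |u - 0| + (c₂ * u) ^ (-γ) * |t - u| := add_le_add nA nB
    _ ≤ m ^ (-γ) * K ^ ((3-α)/2) + (t * c₂ ^ (-γ)) * K ^ ((3-α)/2) := add_le_add hA' hB'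
    _ = (m ^ (-γ) + t * c₂ ^ (-γ)) * K ^ ((3-α)/2) := by ring

lemma sin_ge_min {u v w : ℝ} (hu : 0 ≤ u) (hv : v ≤ π) (huv : u ≤ v) (hw : w ∈ Set.Icc u v) :
    min (Real.sin u) (Real.sin v) ≤ Real.sin w := by
  exact (strictConcaveOn_sin_Icc.concaveOn).ge_on_segment ⟨hu, huv.trans hv⟩ ⟨hu.trans huv, hv⟩
    (by rw [segment_eq_Icc huv]; exact hw)

set_option maxHeartbeats 2000000 in
set_option maxHeartbeats 2000000 in
theorem stmt_11 (a b α : ℝ) (ha : 0 < a) (hb : 0 < b) (hα : 1 < α) (hα2 : α < 2) :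
    ∀ ε₀ : ℝ, 0 < ε₀ → ε₀ < π / 2 →
      ∀ x t : ℝ, 0 < x → 0 < t →
        Tendsto (fun K : ℝ =>
            ∫ θ in (π / 2 + ε₀)..π,
              Complex.I * (K : ℂ) * Complex.exp ((θ : ℂ) * Complex.I) *
                Complex.exp ((x : ℂ) * ((K : ℂ) * Complex.exp ((θ : ℂ) * Complex.I))) *
                Complex.exp (-(a : ℂ) *
                  ∫ s in (0:ℝ)..t, vC b α s ((K : ℂ) * Complex.exp ((θ : ℂ) * Complex.I))))
          atTop (nhds 0) := by
  intro ε₀ hε₀ hε₀' x t hx ht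
  have hπ := Real.pi_pos
  have hα1 : (0:ℝ) < α - 1 := by linarith
  set m : ℝ := min (Real.sin ((α-1)*(π/2+ε₀))) (Real.sin ((α-1)*π)) with hmdef
  have hm : 0 < m := by
    apply lt_min
    · exact sin_alpha_theta_pos α (π/2+ε₀) hα hα2 (by linarith) (by linarith)
    · exact sin_alpha_theta_pos α π hα hα2 (by linarith) le_rfl
  set γ : ℝ := (α-1)⁻¹ with hγ
  set c₂ : ℝ := (α-1)/α/2 with hc₂
  have hc₂0 : 0 < c₂ := by
    have : (0:ℝ) < α := by linarith
    positivity
  set C : ℝ := m ^ (-γ) + t * c₂ ^ (-γ) with hC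
  have hC0 : 0 < C := by positivity
  set ε : ℝ := x * Real.sin ε₀ / 2 with hε
  have hsinε₀ : 0 < Real.sin ε₀ := Real.sin_pos_of_pos_of_lt_pi hε₀ (by linarith)
  have hε0 : 0 < ε := by positivity
  set E : ℝ := Real.exp (b*(α-1)*t) with hE
  have hE0 : 0 < E := Real.exp_pos _
  -- the eventual bound
  have hbound : ∀ᶠ K : ℝ in atTop,
      ‖∫ θ in (π / 2 + ε₀)..π,
          Complex.I * (K : ℂ) * Complex.exp ((θ : ℂ) * Complex.I) *
            Complex.exp ((x : ℂ) * ((K : ℂ) * Complex.exp ((θ : ℂ) * Complex.I))) *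
            Complex.exp (-(a : ℂ) *
              ∫ s in (0:ℝ)..t, vC b α s ((K : ℂ) * Complex.exp ((θ : ℂ) * Complex.I)))‖
        ≤ (K * Real.exp (-(ε * K))) * π := by
    have ev1 : ∀ᶠ K : ℝ in atTop, (1:ℝ) ≤ K := eventually_ge_atTop 1
    have htend : Tendsto (fun K : ℝ => K ^ (-((α-1)/2))) atTop (nhds 0) :=
      tendsto_rpow_neg_atTop (by linarith)
    have ev2 : ∀ᶠ K : ℝ in atTop, K ^ (-((α-1)/2)) < t := htend.eventually_lt_const ht
    have ev3 : ∀ᶠ K : ℝ in atTop, K ^ (-((α-1)/2)) < c₂ / E :=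
      htend.eventually_lt_const (by positivity)
    have htend2 : Tendsto (fun K : ℝ => K ^ ((1-α)/2)) atTop (nhds 0) := by
      have := tendsto_rpow_neg_atTop (y := (α-1)/2) (by linarith)
      refine this.congr fun K => ?_
      rw [show -((α-1)/2) = (1-α)/2 by ring]
    have ev4 : ∀ᶠ K : ℝ in atTop, K ^ ((1-α)/2) < ε / (a * C) :=
      htend2.eventually_lt_const (by positivity)
    filter_upwards [ev1, ev2, ev3, ev4] with K hK1 hK2 hK3 hK4
    have hK0 : (0:ℝ) < K := lt_of_lt_of_le one_pos hK1
    have hKδ : (0:ℝ) < K ^ (-((α-1)/2)) := Real.rpow_pos_of_pos hK0 _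
    -- condition c3
    have hc3 : K ^ (1-α) * E ≤ c₂ * K ^ (-((α-1)/2)) := by
      have hsplit : K ^ (1-α) = K ^ (-((α-1)/2)) * K ^ (-((α-1)/2)) := by
        rw [← Real.rpow_add hK0]; congr 1; ring
      rw [hsplit]
      have h5 : K ^ (-((α-1)/2)) * E ≤ c₂ := by
        rw [← le_div_iff₀ hE0] at *
        linarith [hK3.le]
      nlinarith
    -- condition c4
    have hc4 : a * C * K ^ ((3-α)/2) ≤ ε * K := by
      have hsplit : K ^ ((3-α)/2) = K ^ ((1-α)/2) * K := by
        nth_rewrite 3 [← Real.rpow_one K]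
        rw [← Real.rpow_add hK0]
        congr 1
        ring
      rw [hsplit]
      have h7 : K ^ ((1-α)/2) ≤ ε/(a*C) := hK4.le
      calc a*C*(K^((1-α)/2)*K) ≤ a*C*(ε/(a*C)*K) := by
            apply mul_le_mul_of_nonneg_left _ (by positivity)
            exact mul_le_mul_of_nonneg_right h7 hK0.le
        _ = ε*K := by field_simp
    -- pointwise bound over θ
    have hθbound : ∀ θ ∈ Set.uIoc (π/2 + ε₀) π,
        ‖Complex.I * (K : ℂ) * Complex.exp ((θ : ℂ) * Complex.I) *
            Complex.exp ((x : ℂ) * ((K : ℂ) * Complex.exp ((θ : ℂ) * Complex.I))) *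
            Complex.exp (-(a : ℂ) *
              ∫ s in (0:ℝ)..t, vC b α s ((K : ℂ) * Complex.exp ((θ : ℂ) * Complex.I)))‖
          ≤ K * Real.exp (-(ε * K)) := by
      rw [Set.uIoc_of_le (by linarith)]
      intro θ hθ
      have hθ1 : π/2 + ε₀ < θ := hθ.1
      have hθ2 : θ ≤ π := hθ.2
      have hθ0 : 0 < θ := by linarith
      -- m ≤ sin ((α-1)θ)
      have hmθ : m ≤ Real.sin ((α-1)*θ) := by
        rw [hmdef]
        apply sin_ge_min (by positivity) (by nlinarith) (by nlinarith)
        constructor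
        · nlinarith
        · nlinarith
      -- J bound
      have hJ := J_bound b α t K θ m hb hα hα2 ht hm hmθ hθ0 hθ2 hK1 hK2.le hc3
      set J : ℂ := ∫ s in (0:ℝ)..t, vC b α s ((K : ℂ) * Complex.exp ((θ : ℂ) * Complex.I)) with hJdef
      -- norms
      have e1 : ‖Complex.I * (K:ℂ) * Complex.exp ((θ:ℂ)*Complex.I)‖ = K := by
        simp [Complex.norm_exp, abs_of_pos hK0]
      have e2 : ‖Complex.exp ((x:ℂ)*((K:ℂ)*Complex.exp ((θ:ℂ)*Complex.I)))‖
          = Real.exp (x*(K*Real.cos θ)) := by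
        rw [Complex.norm_exp]
        congr 1
        simp [Complex.mul_re, Complex.exp_ofReal_mul_I_re, Complex.exp_ofReal_mul_I_im]
      have e3 : ‖Complex.exp (-(a:ℂ)*J)‖ ≤ Real.exp (a * (C * K ^ ((3-α)/2))) := by
        rw [Complex.norm_exp]
        apply Real.exp_le_exp.mpr
        have hre : (-(a:ℂ)*J).re = -a * J.re := by simp [Complex.mul_re]
        rw [hre]
        have h6 := Complex.abs_re_le_norm J
        have h7 : ‖J‖ ≤ C * K ^ ((3-α)/2) := hJ
        nlinarith [abs_nonneg J.re, le_abs_self J.re, neg_abs_le J.re]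
      have ecos : Real.exp (x*(K*Real.cos θ)) ≤ Real.exp (-(2*ε*K)) := by
        apply Real.exp_le_exp.mpr
        have hcos : Real.cos θ ≤ -Real.sin ε₀ := by
          have := Real.cos_le_cos_of_nonneg_of_le_pi (by positivity : (0:ℝ) ≤ π/2 + ε₀) hθ2 hθ1.le
          rwa [show π/2 + ε₀ = ε₀ + π/2 by ring, Real.cos_add_pi_div_two] at this
        have : x * (K * Real.cos θ) ≤ x * (K * -Real.sin ε₀) := by
          apply mul_le_mul_of_nonneg_left _ hx.le
          exact mul_le_mul_of_nonneg_left hcos hK0.le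
        calc x * (K * Real.cos θ) ≤ x * (K * -Real.sin ε₀) := this
          _ = -(2*ε*K) := by rw [hε]; ring
      have eexp : Real.exp (a * (C * K ^ ((3-α)/2))) ≤ Real.exp (ε * K) := by
        apply Real.exp_le_exp.mpr
        calc a * (C * K ^ ((3-α)/2)) = a * C * K ^ ((3-α)/2) := by ring
          _ ≤ ε * K := hc4
      calc ‖Complex.I * (K : ℂ) * Complex.exp ((θ : ℂ) * Complex.I) *
            Complex.exp ((x : ℂ) * ((K : ℂ) * Complex.exp ((θ : ℂ) * Complex.I))) *
            Complex.exp (-(a:ℂ) * J)‖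
          = K * Real.exp (x*(K*Real.cos θ)) * ‖Complex.exp (-(a:ℂ)*J)‖ := by
            rw [norm_mul, norm_mul, e2]
            rw [e1]
        _ ≤ K * Real.exp (-(2*ε*K)) * Real.exp (ε * K) := by
            apply mul_le_mul (mul_le_mul le_rfl ecos (Real.exp_pos _).le hK0.le)
              (e3.trans eexp) (norm_nonneg _) (by positivity)
        _ = K * Real.exp (-(ε*K)) := by
            rw [mul_assoc, ← Real.exp_add]
            congr 2
            ring
    have := intervalIntegral.norm_integral_le_of_norm_le_const hθbound
    calc ‖∫ θ in (π / 2 + ε₀)..π,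
          Complex.I * (K : ℂ) * Complex.exp ((θ : ℂ) * Complex.I) *
            Complex.exp ((x : ℂ) * ((K : ℂ) * Complex.exp ((θ : ℂ) * Complex.I))) *
            Complex.exp (-(a : ℂ) *
              ∫ s in (0:ℝ)..t, vC b α s ((K : ℂ) * Complex.exp ((θ : ℂ) * Complex.I)))‖
        ≤ K * Real.exp (-(ε*K)) * |π - (π/2 + ε₀)| := this
      _ ≤ (K * Real.exp (-(ε*K))) * π := by
          apply mul_le_mul_of_nonneg_left _ (by positivity)
          rw [abs_of_nonneg (by linarith)]
          linarith
  -- squeeze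
  apply squeeze_zero_norm' hbound
  have h1 : Tendsto (fun y : ℝ => y * Real.exp (-y)) atTop (nhds 0) := by
    have := tendsto_pow_mul_exp_neg_atTop_nhds_zero 1
    simpa using this
  have h2 : Tendsto (fun K : ℝ => ε * K) atTop atTop :=
    Filter.tendsto_id.const_mul_atTop hε0
  have h3 := h1.comp h2
  have h4 : Tendsto (fun K : ℝ => K * Real.exp (-(ε*K))) atTop (nhds 0) := by
    have h5 := h3.const_mul (1/ε)
    rw [mul_zero] at h5
    refine h5.congr fun K => ?_
    simp only [Function.comp]
    field_simp
  have h6 := h4.mul_const π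
  rw [zero_mul] at h6
  exact h6
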